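/- arXiv:2007.11368 — 9 statements merged into one kernel-verified Lean document; each statement's English description precedes it below -/
import Mathlib

section
/- If Δ_{A,B}^m(I) = 0 then Δ_{A^n,B^n}^m(I) = 0 for every integer n ≥ 1; that is, ∑_{j=0}^m (-1)^j C(m,j) A^{n(m-j)} B^{n(m-j)} = 0. -/
open Finset

/-- Δ_{A,B}^r(I) = ∑_{j=0}^r (-1)^j C(r,j) A^{r-j} B^{r-j} -/
noncomputable def elemDelta {X : Type*} [NormedAddCommGroup X] [NormedSpace ℂ X]
    (A B : X →L[ℂ] X) (r : ℕ) : X →L[ℂ] X :=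
  ∑ j ∈ Finset.range (r + 1), ((-1 : ℂ) ^ j * (r.choose j : ℂ)) • (A ^ (r - j) * B ^ (r - j))

/-- δ_{A,B}^r(I) = ∑_{j=0}^r (-1)^j C(r,j) A^{r-j} B^{j} -/
noncomputable def elemdelta {X : Type*} [NormedAddCommGroup X] [NormedSpace ℂ X]
    (A B : X →L[ℂ] X) (r : ℕ) : X →L[ℂ] X :=
  ∑ j ∈ Finset.range (r + 1), ((-1 : ℂ) ^ j * (r.choose j : ℂ)) • (A ^ (r - j) * B ^ j)

variable {X : Type*} [NormedAddCommGroup X] [NormedSpace ℂ X]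

/-- The two-sided multiplication operator T ↦ A T B, as a linear endomorphism of the
operator space. -/
noncomputable def Lmap (A B : X →L[ℂ] X) : Module.End ℂ (X →L[ℂ] X) where
  toFun T := A * T * B
  map_add' T S := by simp [mul_add, add_mul]
  map_smul' c T := by simp [mul_smul_comm, smul_mul_assoc]

lemma Lmap_apply (A B T : X →L[ℂ] X) : Lmap A B T = A * T * B := rfl

lemma Lmap_pow (A B : X →L[ℂ] X) (n : ℕ) : (Lmap A B) ^ n = Lmap (A ^ n) (B ^ n) := by
  induction n with
  | zero => refine LinearMap.ext fun T => ?_; simp [Lmap_apply]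
  | succ k ih =>
    refine LinearMap.ext fun T => ?_
    rw [pow_succ, Module.End.mul_apply, ih, Lmap_apply, Lmap_apply,
      pow_succ A k, pow_succ' B k]
    simp [Lmap_apply, mul_assoc]

lemma Lmap_pow_one (A B : X →L[ℂ] X) (k : ℕ) : ((Lmap A B) ^ k) 1 = A ^ k * B ^ k := by
  rw [Lmap_pow]; simp [Lmap_apply]

lemma sub_one_pow_apply_one (D : Module.End ℂ (X →L[ℂ] X)) (r : ℕ) :
    ((D - 1) ^ r) 1 = ∑ j ∈ Finset.range (r + 1),
      ((-1 : ℂ) ^ j * (r.choose j : ℂ)) • ((D ^ (r - j)) 1) := by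
  have hc : Commute D (-1 : Module.End ℂ (X →L[ℂ] X)) := Commute.neg_one_right D
  have key : (D - 1) ^ r = ∑ m ∈ Finset.range (r + 1),
      ((-1 : ℂ) ^ (r - m) * (r.choose m : ℂ)) • D ^ m := by
    rw [sub_eq_add_neg, hc.add_pow]
    refine Finset.sum_congr rfl fun m hm => ?_
    have h1 : ((-1 : Module.End ℂ (X →L[ℂ] X)) ^ (r - m)) =
        algebraMap ℂ _ ((-1 : ℂ) ^ (r - m)) := by
      rw [map_pow, map_neg, map_one]
    have h2 : ((r.choose m : Module.End ℂ (X →L[ℂ] X))) =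
        algebraMap ℂ _ ((r.choose m : ℂ)) := by
      simp
    rw [h1, h2, mul_assoc, ← map_mul, ← Algebra.commutes, ← Algebra.smul_def]
  rw [key, LinearMap.sum_apply]
  rw [← Finset.sum_range_reflect]
  refine Finset.sum_congr rfl fun j hj => ?_
  rw [Finset.mem_range] at hj
  rw [LinearMap.smul_apply]
  have h1 : r + 1 - 1 - j = r - j := by omega
  have h2 : r - (r - j) = j := by omega
  rw [h1, h2, Nat.choose_symm (by omega)]

lemma elemDelta_eq (A B : X →L[ℂ] X) (r : ℕ) :
    elemDelta A B r = ((Lmap A B - 1) ^ r) 1 := by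
  rw [sub_one_pow_apply_one]
  exact Finset.sum_congr rfl fun j _ => by rw [Lmap_pow_one]

theorem stmt2 (A B : X →L[ℂ] X) (m : ℕ) (h : elemDelta A B m = 0) :
    ∀ n : ℕ, 1 ≤ n → elemDelta (A ^ n) (B ^ n) m = 0 := by
  intro n _
  rw [elemDelta_eq] at h ⊢
  set L := Lmap A B with hL
  rw [← Lmap_pow]
  set S : Module.End ℂ (X →L[ℂ] X) := ∑ i ∈ Finset.range n, L ^ i with hS
  have hgeom : L ^ n - 1 = S * (L - 1) := (geom_sum_mul L n).symm
  have hcomm : Commute S (L - 1) :=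
    Commute.sum_left _ _ _ fun i _ =>
      ((Commute.refl L).pow_left i).sub_right (Commute.one_right _)
  rw [hgeom, hcomm.mul_pow, Module.End.mul_apply, h, map_zero]
end

section
/- If δ_{A,B}^m(I) = 0 then δ_{A^n,B^n}^m(I) = 0 for every integer n ≥ 1; that is, ∑_{j=0}^m (-1)^j C(m,j) A^{n(m-j)} B^{nj} = 0. -/
open Finset

variable {X : Type*} [NormedAddCommGroup X] [NormedSpace ℂ X]

lemma key_elemdelta (A B : X →L[ℂ] X) (r : ℕ) :
    ((LinearMap.mulLeft ℂ A - LinearMap.mulRight ℂ B) ^ r) (1 : X →L[ℂ] X)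
      = elemdelta A B r := by
  have hc : Commute (LinearMap.mulLeft ℂ A) (-(LinearMap.mulRight ℂ B)) :=
    ((LinearMap.commute_mulLeft_right A B :
      Commute (LinearMap.mulLeft ℂ A) (LinearMap.mulRight ℂ B))).neg_right
  rw [sub_eq_add_neg, hc.add_pow]
  rw [elemdelta, ← Finset.sum_range_reflect]
  rw [LinearMap.coe_sum, Finset.sum_apply]
  refine Finset.sum_congr rfl fun j hj => ?_
  rw [Finset.mem_range, Nat.lt_succ_iff] at hj
  have h1 : r + 1 - 1 - j = r - j := by omega
  have h2 : r - (r - j) = j := by omega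
  rw [h1, h2, Nat.choose_symm hj, neg_pow (LinearMap.mulRight ℂ B) j, LinearMap.pow_mulLeft, LinearMap.pow_mulRight]
  simp [Module.End.mul_apply, mul_smul, Nat.cast_smul_eq_nsmul]
  rcases Nat.even_or_odd j with hje | hje
  · simp only [hje.neg_one_pow, Module.End.one_apply, one_smul]
    exact ((Nat.cast_commute (r.choose j) (A ^ (r - j))).symm.left_comm _)
  · simp only [hje.neg_one_pow, LinearMap.neg_apply, Module.End.one_apply, neg_smul, one_smul,
      mul_neg, neg_inj]
    exact ((Nat.cast_commute (r.choose j) (A ^ (r - j))).symm.left_comm _)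

theorem stmt3 (A B : X →L[ℂ] X) (m : ℕ) (h : elemdelta A B m = 0) :
    ∀ n : ℕ, 1 ≤ n → elemdelta (A ^ n) (B ^ n) m = 0 := by
  intro n _
  set L := LinearMap.mulLeft ℂ A with hL
  set R := LinearMap.mulRight ℂ B with hR
  have hc : Commute L R := LinearMap.commute_mulLeft_right A B
  have hD : ((L - R) ^ m) (1 : X →L[ℂ] X) = 0 := by
    rw [key_elemdelta, h]
  set S : (X →L[ℂ] X) →ₗ[ℂ] (X →L[ℂ] X) :=
    ∑ i ∈ Finset.range n, L ^ i * R ^ (n - 1 - i) with hSdef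
  have hfac : LinearMap.mulLeft ℂ (A ^ n) - LinearMap.mulRight ℂ (B ^ n)
      = S * (L - R) := by
    rw [← LinearMap.pow_mulLeft, ← LinearMap.pow_mulRight, ← hc.geom_sum₂_mul, hSdef, hL, hR]
  have hS : Commute S (L - R) := by
    refine Commute.sum_left _ _ _ fun i _ => ?_
    have h1 : Commute (L ^ i * R ^ (n - 1 - i)) L :=
      Commute.mul_left ((Commute.refl L).pow_left i) ((hc.symm).pow_left _)
    have h2 : Commute (L ^ i * R ^ (n - 1 - i)) R :=
      Commute.mul_left (hc.pow_left i) ((Commute.refl R).pow_left _)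
    exact h1.sub_right h2
  rw [← key_elemdelta, hfac, hS.mul_pow, Module.End.mul_apply, hD, map_zero]
end

section
/- If A and B are invertible and Δ_{A,B}^m(I) = 0, then Δ_{A^{-1},B^{-1}}^m(I) = 0. -/
open Finset

variable {X : Type*} [NormedAddCommGroup X] [NormedSpace ℂ X]

theorem stmt4 (A B : (X →L[ℂ] X)ˣ) (m : ℕ)
    (h : elemDelta (A : X →L[ℂ] X) (B : X →L[ℂ] X) m = 0) :
    elemDelta ((A⁻¹ : (X →L[ℂ] X)ˣ) : X →L[ℂ] X) ((B⁻¹ : (X →L[ℂ] X)ˣ) : X →L[ℂ] X) m = 0 := by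
  unfold elemDelta at h ⊢
  -- the "reversed" sum vanishes as well
  have key : ∑ j ∈ Finset.range (m + 1),
      ((-1 : ℂ) ^ j * (m.choose j : ℂ)) • ((A : X →L[ℂ] X) ^ j * (B : X →L[ℂ] X) ^ j) = 0 := by
    rw [← Finset.sum_range_reflect]
    have congr1 : ∀ j ∈ Finset.range (m + 1),
        ((-1 : ℂ) ^ (m + 1 - 1 - j) * (m.choose (m + 1 - 1 - j) : ℂ)) •
          ((A : X →L[ℂ] X) ^ (m + 1 - 1 - j) * (B : X →L[ℂ] X) ^ (m + 1 - 1 - j)) =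
        ((-1 : ℂ) ^ m) • (((-1 : ℂ) ^ j * (m.choose j : ℂ)) •
          ((A : X →L[ℂ] X) ^ (m - j) * (B : X →L[ℂ] X) ^ (m - j))) := by
      intro j hj
      have hj' : j ≤ m := Nat.lt_succ_iff.mp (Finset.mem_range.mp hj)
      simp only [Nat.add_sub_cancel]
      rw [Nat.choose_symm hj', smul_smul]
      congr 1
      have hm : ((-1 : ℂ)) ^ m = (-1 : ℂ) ^ j * (-1 : ℂ) ^ (m - j) := by
        rw [← pow_add, Nat.add_sub_cancel' hj']
      have h2 : ((-1 : ℂ) ^ j) * ((-1 : ℂ) ^ j) = 1 := by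
        rw [← mul_pow]; norm_num
      rw [hm]
      ring_nf
      rw [pow_mul, show ((-1:ℂ) ^ j) ^ 2 = 1 by
        rw [← pow_mul, mul_comm, pow_mul]; norm_num, mul_one]
    rw [Finset.sum_congr rfl congr1, ← Finset.smul_sum, h, smul_zero]
  -- rewrite each term of the goal
  have congr2 : ∀ j ∈ Finset.range (m + 1),
      ((-1 : ℂ) ^ j * (m.choose j : ℂ)) •
        (((A⁻¹ : (X →L[ℂ] X)ˣ) : X →L[ℂ] X) ^ (m - j) *
          ((B⁻¹ : (X →L[ℂ] X)ˣ) : X →L[ℂ] X) ^ (m - j)) =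
      ((A⁻¹ : (X →L[ℂ] X)ˣ) : X →L[ℂ] X) ^ m *
        ((((-1 : ℂ) ^ j * (m.choose j : ℂ)) •
          ((A : X →L[ℂ] X) ^ j * (B : X →L[ℂ] X) ^ j)) *
          ((B⁻¹ : (X →L[ℂ] X)ˣ) : X →L[ℂ] X) ^ m) := by
    intro j hj
    have hj' : j ≤ m := Nat.lt_succ_iff.mp (Finset.mem_range.mp hj)
    have hA : ((A⁻¹ : (X →L[ℂ] X)ˣ) : X →L[ℂ] X) ^ (m - j) =
        ((A⁻¹ : (X →L[ℂ] X)ˣ) : X →L[ℂ] X) ^ m * (A : X →L[ℂ] X) ^ j := by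
      have hu' : (A⁻¹ : (X →L[ℂ] X)ˣ) ^ m * A ^ j = A⁻¹ ^ (m - j) := by
        calc (A⁻¹ : (X →L[ℂ] X)ˣ) ^ m * A ^ j
            = A⁻¹ ^ (m - j) * (A⁻¹ ^ j * A ^ j) := by
              rw [← mul_assoc, ← pow_add, Nat.sub_add_cancel hj']
          _ = A⁻¹ ^ (m - j) := by simp
      have hu := hu'.symm
      rw [← Units.val_pow_eq_pow_val, hu, Units.val_mul,
        Units.val_pow_eq_pow_val, Units.val_pow_eq_pow_val]
    have hB : ((B⁻¹ : (X →L[ℂ] X)ˣ) : X →L[ℂ] X) ^ (m - j) =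
        (B : X →L[ℂ] X) ^ j * ((B⁻¹ : (X →L[ℂ] X)ˣ) : X →L[ℂ] X) ^ m := by
      have hu' : (B : (X →L[ℂ] X)ˣ) ^ j * B⁻¹ ^ m = B⁻¹ ^ (m - j) := by
        calc (B : (X →L[ℂ] X)ˣ) ^ j * B⁻¹ ^ m
            = (B ^ j * B⁻¹ ^ j) * B⁻¹ ^ (m - j) := by
              rw [mul_assoc, ← pow_add, Nat.add_sub_cancel' hj']
          _ = B⁻¹ ^ (m - j) := by simp
      have hu := hu'.symm
      rw [← Units.val_pow_eq_pow_val, hu, Units.val_mul,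
        Units.val_pow_eq_pow_val, Units.val_pow_eq_pow_val]
    rw [hA, hB]
    simp only [mul_smul_comm, smul_mul_assoc, mul_assoc]
  rw [Finset.sum_congr rfl congr2, ← Finset.mul_sum, ← Finset.sum_mul, key,
    zero_mul, mul_zero]
end

section
/- If A and B are invertible and δ_{A,B}^m(I) = 0, then δ_{A^{-1},B^{-1}}^m(I) = 0. -/
open Finset

variable {X : Type*} [NormedAddCommGroup X] [NormedSpace ℂ X]

lemma aux_cancel_right {M : Type*} [Monoid M] (u : Mˣ) {j m : ℕ} (hj : j ≤ m) :
    (u : M) ^ m * ((↑u⁻¹ : M)) ^ (m - j) = (u : M) ^ j := by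
  have h1 : (u : M) ^ m = (u : M) ^ j * (u : M) ^ (m - j) := by
    rw [← pow_add, Nat.add_sub_cancel' hj]
  have h2 : (u : M) ^ (m - j) * ((↑u⁻¹ : M)) ^ (m - j) = 1 := by
    rw [← Units.val_pow_eq_pow_val, ← Units.val_pow_eq_pow_val, ← Units.val_mul,
      inv_pow, mul_inv_cancel, Units.val_one]
  rw [h1, mul_assoc, h2, mul_one]

lemma aux_cancel_left {M : Type*} [Monoid M] (u : Mˣ) {j m : ℕ} (hj : j ≤ m) :
    ((↑u⁻¹ : M)) ^ j * (u : M) ^ m = (u : M) ^ (m - j) := by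
  have h1 : (u : M) ^ m = (u : M) ^ j * (u : M) ^ (m - j) := by
    rw [← pow_add, Nat.add_sub_cancel' hj]
  have h2 : ((↑u⁻¹ : M)) ^ j * (u : M) ^ j = 1 := by
    rw [← Units.val_pow_eq_pow_val, ← Units.val_pow_eq_pow_val, ← Units.val_mul,
      inv_pow, inv_mul_cancel, Units.val_one]
  rw [h1, ← mul_assoc, h2, one_mul]

theorem stmt5 (A B : (X →L[ℂ] X)ˣ) (m : ℕ)
    (h : elemdelta (A : X →L[ℂ] X) (B : X →L[ℂ] X) m = 0) :
    elemdelta ((A⁻¹ : (X →L[ℂ] X)ˣ) : X →L[ℂ] X) ((B⁻¹ : (X →L[ℂ] X)ˣ) : X →L[ℂ] X) m = 0 := by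
  have key : (A : X →L[ℂ] X) ^ m *
      elemdelta ((A⁻¹ : (X →L[ℂ] X)ˣ) : X →L[ℂ] X) ((B⁻¹ : (X →L[ℂ] X)ˣ) : X →L[ℂ] X) m *
      (B : X →L[ℂ] X) ^ m
      = ((-1 : ℂ) ^ m) • elemdelta (A : X →L[ℂ] X) (B : X →L[ℂ] X) m := by
    unfold elemdelta
    rw [Finset.mul_sum, Finset.sum_mul, Finset.smul_sum,
      ← Finset.sum_range_reflect (fun j => ((-1:ℂ)^m) • (((-1:ℂ)^j * (m.choose j : ℂ)) •
        ((A : X →L[ℂ] X) ^ (m - j) * (B : X →L[ℂ] X) ^ j))) (m+1)]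
    apply Finset.sum_congr rfl
    intro j hj
    have hj' : j ≤ m := by
      simp only [Finset.mem_range] at hj; omega
    simp only [Nat.add_sub_cancel]
    have hmid : (A : X →L[ℂ] X) ^ m *
        ((↑A⁻¹ : X →L[ℂ] X) ^ (m - j) * (↑B⁻¹ : X →L[ℂ] X) ^ j) * (B : X →L[ℂ] X) ^ m
        = (A : X →L[ℂ] X) ^ j * (B : X →L[ℂ] X) ^ (m - j) := by
      rw [← mul_assoc, aux_cancel_right A hj', mul_assoc, aux_cancel_left B hj']
    rw [mul_smul_comm, smul_mul_assoc, hmid, smul_smul, Nat.sub_sub_self hj',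
      Nat.choose_symm hj']
    congr 1
    have h2 : (-1:ℂ)^m * ((-1:ℂ)^(m-j) * (m.choose j : ℂ))
        = ((-1:ℂ)^(m + (m - j))) * (m.choose j : ℂ) := by
      rw [pow_add]; ring
    rw [h2]
    congr 1
    have hmj : m + (m - j) = 2 * (m - j) + j := by omega
    rw [hmj, pow_add, pow_mul]
    simp
  have h0 : (A : X →L[ℂ] X) ^ m *
      elemdelta ((A⁻¹ : (X →L[ℂ] X)ˣ) : X →L[ℂ] X) ((B⁻¹ : (X →L[ℂ] X)ˣ) : X →L[ℂ] X) m *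
      (B : X →L[ℂ] X) ^ m = 0 := by rw [key, h, smul_zero]
  have hA1 : (↑A⁻¹ : X →L[ℂ] X) ^ m * (A : X →L[ℂ] X) ^ m = 1 := by
    simpa using aux_cancel_left A (le_refl m)
  have hB1 : (B : X →L[ℂ] X) ^ m * (↑B⁻¹ : X →L[ℂ] X) ^ m = 1 := by
    simpa using aux_cancel_right B (Nat.zero_le m)
  calc elemdelta ((A⁻¹ : (X →L[ℂ] X)ˣ) : X →L[ℂ] X) ((B⁻¹ : (X →L[ℂ] X)ˣ) : X →L[ℂ] X) m
      = ((↑A⁻¹ : X →L[ℂ] X) ^ m * (A : X →L[ℂ] X) ^ m) *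
        elemdelta ((A⁻¹ : (X →L[ℂ] X)ˣ) : X →L[ℂ] X) ((B⁻¹ : (X →L[ℂ] X)ˣ) : X →L[ℂ] X) m *
        ((B : X →L[ℂ] X) ^ m * (↑B⁻¹ : X →L[ℂ] X) ^ m) := by
        rw [hA1, hB1, one_mul, mul_one]
    _ = (↑A⁻¹ : X →L[ℂ] X) ^ m * ((A : X →L[ℂ] X) ^ m *
        elemdelta ((A⁻¹ : (X →L[ℂ] X)ˣ) : X →L[ℂ] X) ((B⁻¹ : (X →L[ℂ] X)ˣ) : X →L[ℂ] X) m *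
        (B : X →L[ℂ] X) ^ m) * (↑B⁻¹ : X →L[ℂ] X) ^ m := by
        noncomm_ring
    _ = 0 := by rw [h0, mul_zero, zero_mul]
end

section
/- If A^{n-1-i} Δ_{A,B}^{m+i}(I) B^{n-1-i} = 0 for some integer n ≥ 1 and all i with 0 ≤ i ≤ n-1, then Δ_{A,B}^m(I) = 0. -/
open Finset

variable {X : Type*} [NormedAddCommGroup X] [NormedSpace ℂ X]

lemma mul_elemDelta_mul (A B : X →L[ℂ] X) (r : ℕ) :
    A * elemDelta A B r * B =
      ∑ j ∈ Finset.range (r + 1),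
        ((-1 : ℂ) ^ j * (r.choose j : ℂ)) • (A ^ (r + 1 - j) * B ^ (r + 1 - j)) := by
  unfold elemDelta
  rw [Finset.mul_sum, Finset.sum_mul]
  refine Finset.sum_congr rfl fun j hj => ?_
  rw [mul_smul_comm, smul_mul_assoc]
  congr 1
  have h1 : r + 1 - j = (r - j) + 1 := by
    have : j ≤ r := by simpa [Nat.lt_succ_iff] using hj
    omega
  rw [h1, pow_succ' A, pow_succ B]
  simp only [mul_assoc]

lemma elemDelta_succ (A B : X →L[ℂ] X) (r : ℕ) :
    elemDelta A B (r + 1) + elemDelta A B r = A * elemDelta A B r * B := by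
  rw [mul_elemDelta_mul]
  conv_lhs => rw [elemDelta, Finset.sum_range_succ']
  have hstep : ∀ j ∈ Finset.range (r + 1),
      ((-1 : ℂ) ^ (j + 1) * ((r + 1).choose (j + 1) : ℂ)) •
          (A ^ (r + 1 - (j + 1)) * B ^ (r + 1 - (j + 1)))
        = ((-1 : ℂ) ^ (j + 1) * (r.choose (j + 1) : ℂ)) • (A ^ (r - j) * B ^ (r - j))
          - ((-1 : ℂ) ^ j * (r.choose j : ℂ)) • (A ^ (r - j) * B ^ (r - j)) := by
    intro j hj
    have h2 : r + 1 - (j + 1) = r - j := by omega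
    have hc : (((r + 1).choose (j + 1) : ℕ) : ℂ) = (r.choose (j + 1) : ℂ) + (r.choose j : ℂ) := by
      rw [Nat.choose_succ_succ]; push_cast; ring
    have hx : ((-1 : ℂ)) ^ (j + 1) = -(-1 : ℂ) ^ j := by rw [pow_succ]; ring
    rw [h2, hc, hx]
    module
  rw [Finset.sum_congr rfl hstep, Finset.sum_sub_distrib]
  have hzero : ((-1 : ℂ) ^ (r + 1) * (r.choose (r + 1) : ℂ)) • (A ^ (r - r) * B ^ (r - r))
      = (0 : X →L[ℂ] X) := by
    simp [Nat.choose_eq_zero_of_lt]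
  have hA : ∑ j ∈ Finset.range (r + 1),
        ((-1 : ℂ) ^ j * (r.choose j : ℂ)) • (A ^ (r + 1 - j) * B ^ (r + 1 - j))
      = (∑ j ∈ Finset.range r,
          ((-1 : ℂ) ^ (j + 1) * (r.choose (j + 1) : ℂ)) • (A ^ (r - j) * B ^ (r - j)))
        + ((-1 : ℂ) ^ 0 * (r.choose 0 : ℂ)) • (A ^ (r + 1 - 0) * B ^ (r + 1 - 0)) := by
    rw [Finset.sum_range_succ']
    congr 1
    refine Finset.sum_congr rfl fun j hj => ?_
    have h2 : r + 1 - (j + 1) = r - j := by omega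
    rw [h2]
  rw [hA]
  have hext : ∑ j ∈ Finset.range (r + 1),
        ((-1 : ℂ) ^ (j + 1) * (r.choose (j + 1) : ℂ)) • (A ^ (r - j) * B ^ (r - j))
      = ∑ j ∈ Finset.range r,
        ((-1 : ℂ) ^ (j + 1) * (r.choose (j + 1) : ℂ)) • (A ^ (r - j) * B ^ (r - j)) := by
    rw [Finset.sum_range_succ, hzero, add_zero]
  rw [hext]
  unfold elemDelta
  simp only [pow_zero, Nat.choose_zero_right, Nat.cast_one, one_mul, Nat.sub_zero,
    Nat.add_sub_cancel]
  abel

lemma sandwich (A B : X →L[ℂ] X) (r k : ℕ)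
    (h1 : A ^ (k + 1) * elemDelta A B r * B ^ (k + 1) = 0)
    (h2 : A ^ k * elemDelta A B (r + 1) * B ^ k = 0) :
    A ^ k * elemDelta A B r * B ^ k = 0 := by
  have key : A ^ (k + 1) * elemDelta A B r * B ^ (k + 1)
      = A ^ k * elemDelta A B (r + 1) * B ^ k + A ^ k * elemDelta A B r * B ^ k := by
    rw [pow_succ A, pow_succ' B]
    calc A ^ k * A * elemDelta A B r * (B * B ^ k)
        = A ^ k * (A * elemDelta A B r * B) * B ^ k := by
          simp only [mul_assoc]
      _ = A ^ k * (elemDelta A B (r + 1) + elemDelta A B r) * B ^ k := by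
          rw [elemDelta_succ]
      _ = A ^ k * elemDelta A B (r + 1) * B ^ k + A ^ k * elemDelta A B r * B ^ k := by
          rw [mul_add, add_mul]
  rw [h1, h2, zero_add] at key
  exact key.symm

theorem stmt9 (A B : X →L[ℂ] X) (m n : ℕ) (hn : 1 ≤ n)
    (h : ∀ i : ℕ, i ≤ n - 1 → A ^ (n - 1 - i) * elemDelta A B (m + i) * B ^ (n - 1 - i) = 0) :
    elemDelta A B m = 0 := by
  have main : ∀ j : ℕ, j ≤ n - 1 → ∀ i : ℕ, i + j ≤ n - 1 →
      A ^ (n - 1 - i - j) * elemDelta A B (m + i) * B ^ (n - 1 - i - j) = 0 := by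
    intro j
    induction j with
    | zero => intro _ i hi; simpa using h i (by omega)
    | succ j ih =>
      intro hj i hi
      have hk : n - 1 - i - (j + 1) + 1 = n - 1 - i - j := by omega
      have h1 : A ^ (n - 1 - i - (j + 1) + 1) * elemDelta A B (m + i)
          * B ^ (n - 1 - i - (j + 1) + 1) = 0 := by
        rw [hk]; exact ih (by omega) i (by omega)
      have h2 : A ^ (n - 1 - i - (j + 1)) * elemDelta A B (m + i + 1)
          * B ^ (n - 1 - i - (j + 1)) = 0 := by
        have := ih (by omega) (i + 1) (by omega)
        have he : n - 1 - (i + 1) - j = n - 1 - i - (j + 1) := by omega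
        rw [he] at this
        simpa [add_assoc] using this
      exact sandwich A B (m + i) _ h1 h2
  have := main (n - 1) le_rfl 0 (by omega)
  simpa using this
end

section
/- Let A₁, A₂, B₁, B₂ be bounded operators with A₁A₂ = A₂A₁ and B₁B₂ = B₂B₁. If δ_{A₁,B₁}^m(I) = 0 and δ_{A₂,B₂}^n(I) = 0, then δ_{A₁A₂, B₁B₂}^{m+n-1}(I) = 0. -/
open Finset

variable {X : Type*} [NormedAddCommGroup X] [NormedSpace ℂ X]

set_option maxHeartbeats 1600000 in
lemma elemdelta_eq (A B : X →L[ℂ] X) (r : ℕ) :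
    elemdelta A B r =
      (((LinearMap.mulLeft ℂ A : Module.End ℂ (X →L[ℂ] X))
        - LinearMap.mulRight ℂ B) ^ r) (1 : X →L[ℂ] X) := by
  set x : Module.End ℂ (X →L[ℂ] X) := LinearMap.mulLeft ℂ A with hx
  set y : Module.End ℂ (X →L[ℂ] X) := LinearMap.mulRight ℂ B with hy
  have hc : Commute x (-y) := (LinearMap.commute_mulLeft_right (R := ℂ) A B).neg_right
  rw [sub_eq_add_neg, hc.add_pow, LinearMap.sum_apply]
  rw [elemdelta, ← Finset.sum_range_reflect]
  apply Finset.sum_congr rfl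
  intro j hj
  have hj' : j ≤ r := Nat.lt_succ_iff.mp (mem_range.mp hj)
  have h1 : r + 1 - 1 - j = r - j := by omega
  have h2 : r - (r - j) = j := by omega
  rw [h1, h2, Nat.choose_symm hj']
  have hneg : (-y) ^ (r - j) = ((-1 : ℂ) ^ (r - j)) • y ^ (r - j) := by
    rw [← neg_one_smul ℂ y, smul_pow]
  rw [hneg]
  set_option maxHeartbeats 1000000 in
  rw [mul_smul_comm, smul_mul_assoc, LinearMap.smul_apply]
  simp only [Module.End.mul_apply, Module.End.natCast_apply, hx, hy,
    LinearMap.pow_mulLeft, LinearMap.pow_mulRight,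
    LinearMap.mulLeft_apply, LinearMap.mulRight_apply, one_mul,
    ← Nat.cast_smul_eq_nsmul ℂ, map_smul, smul_smul]

theorem stmt11 (A₁ A₂ B₁ B₂ : X →L[ℂ] X) (m n : ℕ)
    (hA : A₁ * A₂ = A₂ * A₁) (hB : B₁ * B₂ = B₂ * B₁)
    (h1 : elemdelta A₁ B₁ m = 0) (h2 : elemdelta A₂ B₂ n = 0) :
    elemdelta (A₁ * A₂) (B₁ * B₂) (m + n - 1) = 0 := by
  set l1 : Module.End ℂ (X →L[ℂ] X) := LinearMap.mulLeft ℂ A₁ with hl1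
  set l2 : Module.End ℂ (X →L[ℂ] X) := LinearMap.mulLeft ℂ A₂ with hl2
  set r1 : Module.End ℂ (X →L[ℂ] X) := LinearMap.mulRight ℂ B₁ with hr1
  set r2 : Module.End ℂ (X →L[ℂ] X) := LinearMap.mulRight ℂ B₂ with hr2
  have c11 : Commute l1 r1 := LinearMap.commute_mulLeft_right (R := ℂ) _ _
  have c12 : Commute l1 r2 := LinearMap.commute_mulLeft_right (R := ℂ) _ _
  have c21 : Commute l2 r1 := LinearMap.commute_mulLeft_right (R := ℂ) _ _
  have c22 : Commute l2 r2 := LinearMap.commute_mulLeft_right (R := ℂ) _ _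
  have cll : Commute l1 l2 := by
    show l1 * l2 = l2 * l1
    ext T
    simp only [hl1, hl2, Module.End.mul_apply, LinearMap.mulLeft_apply, ← mul_assoc, hA]
  have crr : Commute r1 r2 := by
    show r1 * r2 = r2 * r1
    ext T
    simp only [hr1, hr2, Module.End.mul_apply, LinearMap.mulRight_apply, mul_assoc, hB]
  set d1 : Module.End ℂ (X →L[ℂ] X) := l1 - r1 with hd1
  set d2 : Module.End ℂ (X →L[ℂ] X) := l2 - r2 with hd2
  have cl1d2 : Commute l1 d2 := cll.sub_right c12
  have cr1d2 : Commute r1 d2 := c21.symm.sub_right crr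
  have cd1d2 : Commute d1 d2 := cl1d2.sub_left cr1d2
  have cl2d1 : Commute l2 d1 := cll.symm.sub_right c21
  have cd1r1 : Commute d1 r1 := c11.sub_left (Commute.refl r1)
  have cl2d2 : Commute l2 d2 := (Commute.refl l2).sub_right c22
  have cbig : Commute (l2 * d1) (r1 * d2) :=
    (c21.mul_right cl2d2).mul_left (cd1r1.mul_right cd1d2)
  have hD : ((LinearMap.mulLeft ℂ (A₁ * A₂) : Module.End ℂ (X →L[ℂ] X))
      - LinearMap.mulRight ℂ (B₁ * B₂)) = l2 * d1 + r1 * d2 := by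
    ext T
    simp only [hd1, hd2, hl1, hl2, hr1, hr2, LinearMap.sub_apply, LinearMap.add_apply,
      Module.End.mul_apply, LinearMap.mulLeft_apply, LinearMap.mulRight_apply]
    rw [hA, hB]
    noncomm_ring
  have hz1 : (d1 ^ m) (1 : X →L[ℂ] X) = 0 := by
    rw [hd1, hl1, hr1, ← elemdelta_eq]; exact h1
  have hz2 : (d2 ^ n) (1 : X →L[ℂ] X) = 0 := by
    rw [hd2, hl2, hr2, ← elemdelta_eq]; exact h2
  rw [elemdelta_eq, hD, cbig.add_pow, LinearMap.sum_apply]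
  apply Finset.sum_eq_zero
  intro k hk
  have hk' : k ≤ m + n - 1 := Nat.lt_succ_iff.mp (Finset.mem_range.mp hk)
  set j := m + n - 1 - k with hj
  rw [cl2d1.mul_pow, cr1d2.mul_pow]
  by_cases hm : m ≤ k
  · have hcomm : d1 ^ k * (r1 ^ j * d2 ^ j) = (r1 ^ j * d2 ^ j) * d1 ^ k :=
      (((cd1r1.pow_right j).mul_right (cd1d2.pow_right j)).pow_left k).eq
    have hpow : d1 ^ k = d1 ^ (k - m) * d1 ^ m := by
      rw [← pow_add, Nat.sub_add_cancel hm]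
    rw [mul_assoc (l2 ^ k), hcomm, hpow]
    simp only [Module.End.mul_apply, Module.End.natCast_apply, map_nsmul, hz1,
      map_zero, smul_zero, LinearMap.zero_apply]
  · have hn : n ≤ j := by omega
    have hpow : d2 ^ j = d2 ^ (j - n) * d2 ^ n := by
      rw [← pow_add, Nat.sub_add_cancel hn]
    rw [hpow]
    simp only [Module.End.mul_apply, Module.End.natCast_apply, map_nsmul, hz2,
      map_zero, smul_zero, LinearMap.zero_apply]
end

section
/- Let Δ_{A,B}^m(I) = 0 and let N be an n-nilpotent operator (N^n = 0) commuting with B. Then Δ_{A,B+N}^{m+n-1}(I) = 0. -/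
open Finset

variable {X : Type*} [NormedAddCommGroup X] [NormedSpace ℂ X]

namespace Stmt13Aux

/-- The map `x ↦ A * x * C` as an endomorphism of the operator algebra. -/
noncomputable def FT (A C : X →L[ℂ] X) : Module.End ℂ (X →L[ℂ] X) :=
  (LinearMap.mulLeft ℂ A) * (LinearMap.mulRight ℂ C)

lemma FT_apply (A C x : X →L[ℂ] X) : FT A C x = A * x * C := by
  simp [FT, Module.End.mul_apply, mul_assoc]

lemma FT_add (A B N : X →L[ℂ] X) : FT A (B + N) = FT A B + FT A N := by
  ext x
  simp [FT_apply, mul_add]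

lemma FT_pow_apply (A C : X →L[ℂ] X) (k : ℕ) (x : X →L[ℂ] X) :
    ((FT A C) ^ k) x = A ^ k * x * C ^ k := by
  induction k generalizing x with
  | zero => simp
  | succ k ih =>
    rw [pow_succ, Module.End.mul_apply, FT_apply, ih, pow_succ, pow_succ']
    noncomm_ring

lemma delta_eq (A C : X →L[ℂ] X) (r : ℕ) :
    elemDelta A C r = (((FT A C) - 1) ^ r) 1 := by
  have hco : Commute (FT A C) (-1 : Module.End ℂ (X →L[ℂ] X)) :=
    Commute.neg_one_right (FT A C)
  rw [sub_eq_add_neg, hco.add_pow]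
  rw [elemDelta, ← Finset.sum_range_reflect]
  rw [LinearMap.sum_apply]
  simp only [Nat.add_sub_cancel]
  refine Finset.sum_congr rfl fun j hj => ?_
  have hj' : j ≤ r := Nat.lt_succ_iff.mp (Finset.mem_range.mp hj)
  rw [Nat.sub_sub_self hj', Nat.choose_symm hj']
  rw [Module.End.mul_apply, Module.End.mul_apply]
  have h1 : ((r.choose j : ℕ) : Module.End ℂ (X →L[ℂ] X)) (1 : X →L[ℂ] X)
      = (r.choose j : ℕ) • (1 : X →L[ℂ] X) := by
    simp [Module.End.natCast_apply]
  rw [h1, map_nsmul, map_nsmul, FT_pow_apply]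
  have h2 : ∀ (k : ℕ) (z : X →L[ℂ] X), ((-1 : Module.End ℂ (X →L[ℂ] X)) ^ k) z
      = ((-1 : ℂ) ^ k) • z := by
    intro k
    induction k with
    | zero => simp
    | succ k ih =>
      intro z
      rw [pow_succ, Module.End.mul_apply, ih, pow_succ]
      simp [smul_smul]
  rw [h2]
  rw [mul_smul_comm, smul_mul_assoc, mul_one, ← Nat.cast_smul_eq_nsmul ℂ, smul_smul, mul_comm]

end Stmt13Aux

open Stmt13Aux in
theorem stmt13 (A B N : X →L[ℂ] X) (m n : ℕ)
    (h : elemDelta A B m = 0) (hN : N ^ n = 0) (hc : B * N = N * B) :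
    elemDelta A (B + N) (m + n - 1) = 0 := by
  rcases Nat.eq_zero_or_pos m with hm | hm
  · subst hm
    simp only [elemDelta, Finset.range_one, Finset.sum_singleton] at h
    norm_num at h
    haveI : Subsingleton (X →L[ℂ] X) := subsingleton_of_zero_eq_one h.symm
    exact Subsingleton.elim _ _
  rcases Nat.eq_zero_or_pos n with hn | hn
  · subst hn
    rw [pow_zero] at hN
    haveI : Subsingleton (X →L[ℂ] X) := subsingleton_of_zero_eq_one hN.symm
    exact Subsingleton.elim _ _
  obtain ⟨m', rfl⟩ : ∃ m', m = m' + 1 := ⟨m - 1, (Nat.succ_pred_eq_of_pos hm).symm⟩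
  obtain ⟨n', rfl⟩ : ∃ n', n = n' + 1 := ⟨n - 1, (Nat.succ_pred_eq_of_pos hn).symm⟩
  set M := m' + 1 + (n' + 1) - 1 with hM
  have hMval : M = m' + n' + 1 := by omega
  -- the two commuting endomorphisms
  set f : Module.End ℂ (X →L[ℂ] X) := FT A B - 1 with hf
  set g : Module.End ℂ (X →L[ℂ] X) := FT A N with hg
  have hcom : Commute f g := by
    have h1 : Commute (FT A B) (FT A N) := by
      apply LinearMap.ext; intro x
      simp only [Module.End.mul_apply, FT_apply]
      calc A * (A * x * N) * B = A * (A * x) * (N * B) := by noncomm_ring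
        _ = A * (A * x) * (B * N) := by rw [hc]
        _ = A * (A * x * B) * N := by noncomm_ring
    exact (h1.sub_left (Commute.one_left _))
  have hfm : ∀ k, m' + 1 ≤ k → (f ^ k) (1 : X →L[ℂ] X) = 0 := by
    intro k hk
    have : f ^ k = f ^ (k - (m' + 1)) * f ^ (m' + 1) := by
      rw [← pow_add]; congr 1; omega
    rw [this, Module.End.mul_apply, ← delta_eq, h, map_zero]
  have hgz : ∀ k, n' + 1 ≤ k → ∀ x : X →L[ℂ] X, (g ^ k) x = 0 := by
    intro k hk x
    rw [hg, FT_pow_apply]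
    have : N ^ k = 0 := pow_eq_zero_of_le hk hN
    rw [this, mul_zero]
  have key : elemDelta A (B + N) M = ((f + g) ^ M) 1 := by
    rw [delta_eq, FT_add]
    congr 1
    rw [hf, hg]
    abel_nf
  rw [key, hcom.add_pow, LinearMap.sum_apply]
  apply Finset.sum_eq_zero
  intro k hk
  rw [Module.End.mul_apply, Module.End.mul_apply]
  have h1 : ((M.choose k : ℕ) : Module.End ℂ (X →L[ℂ] X)) (1 : X →L[ℂ] X)
      = (M.choose k : ℕ) • (1 : X →L[ℂ] X) := by simp [Module.End.natCast_apply]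
  rw [h1, map_nsmul, map_nsmul]
  rcases le_or_gt (m' + 1) k with hkm | hkm
  · rw [← Module.End.mul_apply (f ^ k) (g ^ (M - k)), (hcom.pow_pow k (M - k)).eq,
      Module.End.mul_apply, hfm k hkm, map_zero, smul_zero]
  · have : n' + 1 ≤ M - k := by omega
    rw [hgz _ this, map_zero, smul_zero]
end

section
/- Let δ_{A,B}^m(I) = 0 and let N be an n-nilpotent operator (N^n = 0) commuting with B. Then δ_{A,B+N}^{m+n-1}(I) = 0. -/
open Finset

variable {X : Type*} [NormedAddCommGroup X] [NormedSpace ℂ X]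

set_option maxHeartbeats 1000000 in
lemma delta_eq_pow_aux (A B : X →L[ℂ] X) (r : ℕ) :
    elemdelta A B r =
      ((LinearMap.mulLeft ℂ A + -(LinearMap.mulRight ℂ B)) ^ r) (1 : X →L[ℂ] X) := by
  have hc : Commute (LinearMap.mulLeft ℂ A) (-(LinearMap.mulRight ℂ B)) :=
    Commute.neg_right (R := Module.End ℂ (X →L[ℂ] X))
      (LinearMap.commute_mulLeft_right A B)
  rw [hc.add_pow, elemdelta, ← Finset.sum_range_reflect, LinearMap.sum_apply]
  apply Finset.sum_congr rfl
  intro k hk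
  have hk' : k ≤ r := Nat.lt_succ_iff.mp (Finset.mem_range.mp hk)
  have key : -(LinearMap.mulRight ℂ B) = (-1 : ℂ) • LinearMap.mulRight ℂ B :=
    (neg_one_smul ℂ _).symm
  rw [Nat.add_sub_cancel, Nat.sub_sub_self hk', Nat.choose_symm hk', key, smul_pow,
    LinearMap.pow_mulLeft, LinearMap.pow_mulRight]
  rw [Module.End.mul_apply, Module.End.mul_apply]
  simp only [Module.End.natCast_apply, LinearMap.smul_apply, LinearMap.mulRight_apply,
    LinearMap.mulLeft_apply, one_mul, map_smul, map_nsmul]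
  rw [smul_comm, ← Nat.cast_smul_eq_nsmul ℂ, smul_smul, mul_comm]

lemma elemdelta_eq_zero_of_one_eq_zero (A B : X →L[ℂ] X) (r : ℕ)
    (h1 : (1 : X →L[ℂ] X) = 0) : elemdelta A B r = 0 := by
  calc elemdelta A B r = elemdelta A B r * 1 := (mul_one _).symm
    _ = 0 := by rw [h1, mul_zero]

set_option maxHeartbeats 1000000 in
theorem stmt14 (A B N : X →L[ℂ] X) (m n : ℕ)
    (h : elemdelta A B m = 0) (hN : N ^ n = 0) (hc : B * N = N * B) :
    elemdelta A (B + N) (m + n - 1) = 0 := by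
  rcases Nat.eq_zero_or_pos n with hn | hn
  · subst hn
    exact elemdelta_eq_zero_of_one_eq_zero _ _ _ (by simpa using hN)
  rcases Nat.eq_zero_or_pos m with hm | hm
  · subst hm
    exact elemdelta_eq_zero_of_one_eq_zero _ _ _ (by simpa [elemdelta] using h)
  set lA := LinearMap.mulLeft ℂ A with hlA
  set rB := LinearMap.mulRight ℂ B with hrB
  set rN := LinearMap.mulRight ℂ N with hrN
  set D := lA + -rB with hD
  have hsplit : LinearMap.mulRight ℂ (B + N) = rB + rN := by
    ext x
    simp only [hrB, hrN, LinearMap.mulRight_apply, LinearMap.add_apply, mul_add]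
  have hBN : Commute rB rN := by
    show rB * rN = rN * rB
    ext x
    simp only [hrB, hrN, Module.End.mul_apply, LinearMap.mulRight_apply]
    rw [mul_assoc, mul_assoc, hc]
  have hAN : Commute lA rN := LinearMap.commute_mulLeft_right A N
  have hDN : Commute D (-rN) :=
    Commute.neg_right (R := Module.End ℂ (X →L[ℂ] X))
      (hAN.add_left (Commute.neg_left (R := Module.End ℂ (X →L[ℂ] X)) hBN))
  have hrNpow : ∀ j, n ≤ j → rN ^ j = 0 := by
    intro j hj
    rw [hrN, LinearMap.pow_mulRight]
    have hNj : N ^ j = 0 := by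
      rw [← Nat.add_sub_cancel' hj, pow_add, hN, zero_mul]
    rw [hNj]
    ext x; simp
  have hDm : ∀ k, m ≤ k → (D ^ k) (1 : X →L[ℂ] X) = 0 := by
    intro k hk
    rw [← Nat.sub_add_cancel hk, pow_add, Module.End.mul_apply]
    have hD1 : (D ^ m) (1 : X →L[ℂ] X) = 0 := by
      rw [← delta_eq_pow_aux, h]
    rw [hD1, map_zero]
  rw [delta_eq_pow_aux, hsplit, neg_add, ← add_assoc]
  rw [show lA + -rB + -rN = D + -rN from rfl]
  rw [hDN.add_pow, LinearMap.sum_apply]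
  apply Finset.sum_eq_zero
  intro k hk
  set r := m + n - 1 with hr
  have hk' : k ≤ r := Nat.lt_succ_iff.mp (Finset.mem_range.mp hk)
  rcases le_or_gt n (r - k) with hj | hj
  · have hz : (-rN) ^ (r - k) = 0 := by
      rw [show -rN = (-1 : ℂ) • rN from (neg_one_smul ℂ _).symm, smul_pow,
        hrNpow _ hj, smul_zero]
    rw [hz, mul_zero, zero_mul, LinearMap.zero_apply]
  · have hkm : m ≤ k := by omega
    have hcomm : Commute (D ^ k) ((-rN) ^ (r - k) * (r.choose k : Module.End ℂ (X →L[ℂ] X))) :=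
      (hDN.pow_pow k (r - k)).mul_right (Nat.commute_cast (D ^ k) (r.choose k))
    rw [mul_assoc, hcomm.eq, Module.End.mul_apply, hDm k hkm, map_zero]
end

section
/- Let δ_{A,B}^m(I) = 0, let N₁ be an n₁-nilpotent commuting with B and N₂ an n₂-nilpotent commuting with A. Then δ_{A+N₂, B+N₁}^{m+n₁+n₂-2}(I) = 0. -/
open Finset

variable {X : Type*} [NormedAddCommGroup X] [NormedSpace ℂ X]

open LinearMap in
/-- `elemdelta A B r` equals the `r`-th power of the generalized derivation
`L_A - R_B` applied to the identity. -/
lemma elemdelta_eq_pow_apply_one (A B : X →L[ℂ] X) (r : ℕ) :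
    elemdelta A B r = ((mulLeft ℂ A - mulRight ℂ B : Module.End ℂ (X →L[ℂ] X)) ^ r) 1 := by
  have hc : Commute (-(mulRight ℂ B : Module.End ℂ (X →L[ℂ] X))) (mulLeft ℂ A) :=
    ((commute_mulLeft_right (R := ℂ) A B).symm.neg_left)
  rw [sub_eq_add_neg, add_comm, hc.add_pow, LinearMap.sum_apply]
  unfold elemdelta
  apply Finset.sum_congr rfl
  intro j hj
  have hneg : (-(mulRight ℂ B : Module.End ℂ (X →L[ℂ] X))) = mulRight ℂ (-B) := by
    ext T; simp
  have hB : (-B) ^ j = (-1 : ℂ) ^ j • B ^ j := by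
    rw [← neg_one_smul ℂ B, smul_pow]
  rw [hneg]
  rw [Module.End.mul_apply, Module.End.mul_apply, pow_mulRight, pow_mulLeft,
    Module.End.natCast_apply, hB]
  simp only [mulLeft_apply, mulRight_apply, ← Nat.cast_smul_eq_nsmul ℂ, smul_smul,
    mul_smul_comm, smul_mul_assoc, mul_one, smul_eq_mul]

/-- Sum of two commuting nilpotents is nilpotent with the expected bound on the index. -/
lemma commute_add_pow_eq_zero {E : Type*} [Ring E] {x y : E} (h : Commute x y) {a b : ℕ}
    (hx : x ^ a = 0) (hy : y ^ b = 0) : (x + y) ^ (a + b - 1) = 0 := by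
  rw [h.add_pow]
  apply Finset.sum_eq_zero
  intro j hj
  rcases le_or_gt a j with hja | hja
  · obtain ⟨c, hc⟩ : ∃ c, j = a + c := ⟨j - a, by omega⟩
    rw [hc, pow_add, hx, zero_mul, zero_mul, zero_mul]
  · obtain ⟨c, hc⟩ : ∃ c, a + b - 1 - j = b + c := ⟨a - 1 - j, by omega⟩
    rw [hc, pow_add, hy, zero_mul, mul_zero, zero_mul]

/-- Difference of two commuting nilpotents is nilpotent with the expected bound. -/
lemma commute_sub_pow_eq_zero {E : Type*} [Ring E] {x y : E} (h : Commute x y) {a b : ℕ}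
    (hx : x ^ a = 0) (hy : y ^ b = 0) : (x - y) ^ (a + b - 1) = 0 := by
  rw [sub_eq_add_neg]
  exact commute_add_pow_eq_zero h.neg_right hx (by rw [neg_pow, hy, mul_zero])

theorem stmt15 (A B N₁ N₂ : X →L[ℂ] X) (m n₁ n₂ : ℕ)
    (h : elemdelta A B m = 0) (hN1 : N₁ ^ n₁ = 0) (hN2 : N₂ ^ n₂ = 0)
    (hc1 : B * N₁ = N₁ * B) (hc2 : A * N₂ = N₂ * A) :
    elemdelta (A + N₂) (B + N₁) (m + n₁ + n₂ - 2) = 0 := by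
  -- degenerate cases: the algebra is trivial
  rcases Nat.eq_zero_or_pos m with hm | hm
  · subst hm
    have h1 : (1 : X →L[ℂ] X) = 0 := by simpa [elemdelta] using h
    haveI := subsingleton_of_zero_eq_one h1.symm
    exact Subsingleton.elim _ _
  rcases Nat.eq_zero_or_pos n₁ with hn1 | hn1
  · subst hn1
    have h1 : (1 : X →L[ℂ] X) = 0 := by simpa using hN1
    haveI := subsingleton_of_zero_eq_one h1.symm
    exact Subsingleton.elim _ _
  rcases Nat.eq_zero_or_pos n₂ with hn2 | hn2
  · subst hn2
    have h1 : (1 : X →L[ℂ] X) = 0 := by simpa using hN2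
    haveI := subsingleton_of_zero_eq_one h1.symm
    exact Subsingleton.elim _ _
  open LinearMap in
  -- the main case
  set u : Module.End ℂ (X →L[ℂ] X) := mulLeft ℂ A with hu
  set v : Module.End ℂ (X →L[ℂ] X) := mulRight ℂ B with hv
  set p : Module.End ℂ (X →L[ℂ] X) := mulLeft ℂ N₂ with hp
  set q : Module.End ℂ (X →L[ℂ] X) := mulRight ℂ N₁ with hq
  have hup : Commute u p := by
    show u * p = p * u
    rw [hu, hp, Module.End.mul_eq_comp, Module.End.mul_eq_comp, ← mulLeft_mul, ← mulLeft_mul, hc2]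
  have huq : Commute u q := commute_mulLeft_right (R := ℂ) A N₁
  have hvp : Commute v p := (commute_mulLeft_right (R := ℂ) N₂ B).symm
  have hvq : Commute v q := by
    show v * q = q * v
    rw [hv, hq, Module.End.mul_eq_comp, Module.End.mul_eq_comp, ← mulRight_mul, ← mulRight_mul, hc1]
  have hpq : Commute p q := commute_mulLeft_right (R := ℂ) N₂ N₁
  set D : Module.End ℂ (X →L[ℂ] X) := u - v with hD
  set S : Module.End ℂ (X →L[ℂ] X) := p - q with hS
  have hDS : Commute D S := (hup.sub_right huq).sub_left (hvp.sub_right hvq)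
  have hpn : p ^ n₂ = 0 := by
    rw [hp, pow_mulLeft, hN2]; exact mulLeft_zero_eq_zero ℂ _
  have hqn : q ^ n₁ = 0 := by
    rw [hq, pow_mulRight, hN1]; exact mulRight_zero_eq_zero ℂ _
  have hSnil : S ^ (n₂ + n₁ - 1) = 0 :=
    commute_sub_pow_eq_zero hpq hpn hqn
  have hsplit : (mulLeft ℂ (A + N₂) - mulRight ℂ (B + N₁) : Module.End ℂ (X →L[ℂ] X))
      = D + S := by
    ext T
    simp [hD, hS, hu, hv, hp, hq, add_mul, mul_add]
    abel
  rw [elemdelta_eq_pow_apply_one, hsplit, hDS.add_pow, LinearMap.sum_apply]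
  apply Finset.sum_eq_zero
  intro j hj
  rw [Finset.mem_range] at hj
  set k := m + n₁ + n₂ - 2 with hk
  by_cases hcase : n₂ + n₁ - 1 ≤ k - j
  · obtain ⟨c, hc⟩ : ∃ c, k - j = (n₂ + n₁ - 1) + c := ⟨k - j - (n₂ + n₁ - 1), by omega⟩
    rw [hc, pow_add, hSnil, zero_mul, mul_zero, zero_mul, LinearMap.zero_apply]
  · -- here j ≥ m
    obtain ⟨c, hc⟩ : ∃ c, j = c + m := ⟨j - m, by omega⟩
    have hDj : (D ^ j) (1 : X →L[ℂ] X) = 0 := by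
      rw [hc, pow_add, Module.End.mul_apply, ← elemdelta_eq_pow_apply_one, h, map_zero]
    rw [(hDS.pow_pow j (k - j)).eq, Module.End.mul_apply, Module.End.mul_apply,
      Module.End.natCast_apply, map_nsmul, hDj, smul_zero, map_zero]
end
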